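/- The local dependence measure of the DPRH model satisfies β(y₁,y₂) = 1 for all y₁, y₂ ∈ (a,b) with y₁ ≠ y₂ if and only if θ₁ = θ₁′ and θ₂ = θ₂′, where β(y₁,y₂) = F(y₁,y₂)·f(y₁,y₂) / (F₁(y₁,y₂)·F₂(y₁,y₂)) with F₁ = ∂F/∂y₁ and F₂ = ∂F/∂y₂. -/

import Mathlib

open MeasureTheory Set Filter

noncomputable def Phi (F₀ : ℝ → ℝ) (θ x : ℝ) : ℝ :=
  if θ = 0 then Real.log (F₀ x) else F₀ x ^ θ / θ

section Basic

variable {a b : ℝ} {F₀ f₀ : ℝ → ℝ}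

lemma hasDerivAt_Phi (hderiv : ∀ y ∈ Ioo a b, HasDerivAt F₀ (f₀ y) y)
    (hF₀pos : ∀ y ∈ Ioo a b, 0 < F₀ y) (θ : ℝ) {x : ℝ} (hx : x ∈ Ioo a b) :
    HasDerivAt (Phi F₀ θ) (f₀ x * F₀ x ^ (θ - 1)) x := by
  rcases eq_or_ne θ 0 with h | h
  · subst h
    have h1 : HasDerivAt (fun y => Real.log (F₀ y)) (f₀ x / F₀ x) x :=
      (hderiv x hx).log (hF₀pos x hx).ne'
    have h2 : Phi F₀ 0 = fun y => Real.log (F₀ y) := by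
      funext y; simp [Phi]
    rw [h2, show f₀ x * F₀ x ^ ((0:ℝ) - 1) = f₀ x / F₀ x by
      rw [zero_sub, Real.rpow_neg_one, div_eq_mul_inv]]
    exact h1
  · have h1 : HasDerivAt (fun y => F₀ y ^ θ / θ) (f₀ x * θ * F₀ x ^ (θ - 1) / θ) x :=
      ((hderiv x hx).rpow_const (Or.inl (hF₀pos x hx).ne')).div_const θ
    have h2 : Phi F₀ θ = fun y => F₀ y ^ θ / θ := by
      funext y; simp [Phi, h]
    rw [h2, show f₀ x * F₀ x ^ (θ - 1) = f₀ x * θ * F₀ x ^ (θ - 1) / θ by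
      field_simp]
    exact h1

lemma Phi_strictMono (hderiv : ∀ y ∈ Ioo a b, HasDerivAt F₀ (f₀ y) y)
    (hf₀pos : ∀ y ∈ Ioo a b, 0 < f₀ y)
    (hF₀pos : ∀ y ∈ Ioo a b, 0 < F₀ y) (θ : ℝ) :
    StrictMonoOn (Phi F₀ θ) (Ioo a b) := by
  apply strictMonoOn_of_deriv_pos (convex_Ioo a b)
  · exact fun x hx => (hasDerivAt_Phi hderiv hF₀pos θ hx).continuousAt.continuousWithinAt
  · intro x hx
    rw [interior_Ioo] at hx
    rw [(hasDerivAt_Phi hderiv hF₀pos θ hx).deriv]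
    exact mul_pos (hf₀pos x hx) (Real.rpow_pos_of_pos (hF₀pos x hx) _)

lemma tendsto_rpow_a (hab : a < b)
    (hFa : Tendsto F₀ (nhdsWithin a (Ioi a)) (nhds 0)) {θ : ℝ} (hθ : 0 < θ) :
    Tendsto (fun x => F₀ x ^ θ) (nhdsWithin a (Ioi a)) (nhds 0) := by
  have h := (Real.continuousAt_rpow_const 0 θ (Or.inr hθ.le)).tendsto.comp hFa
  rwa [Real.zero_rpow hθ.ne'] at h

lemma tendsto_Phi_a (hab : a < b)
    (hFa : Tendsto F₀ (nhdsWithin a (Ioi a)) (nhds 0)) {θ : ℝ} (hθ : 0 < θ) :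
    Tendsto (Phi F₀ θ) (nhdsWithin a (Ioi a)) (nhds 0) := by
  have h2 : Phi F₀ θ = fun y => F₀ y ^ θ / θ := by
    funext y; simp [Phi, hθ.ne']
  rw [h2]
  simpa using (tendsto_rpow_a hab hFa hθ).div_const θ

lemma tendsto_psi_a (hab : a < b)
    (hF₀pos : ∀ y ∈ Ioo a b, 0 < F₀ y)
    (hFa : Tendsto F₀ (nhdsWithin a (Ioi a)) (nhds 0)) {θ c : ℝ} (hθ : 0 < θ)
    (hc : 0 < θ + c) :
    Tendsto (fun x => F₀ x ^ θ * Phi F₀ c x) (nhdsWithin a (Ioi a)) (nhds 0) := by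
  have hmem : Ioo a b ∈ nhdsWithin a (Ioi a) := Ioo_mem_nhdsGT_of_mem ⟨le_refl a, hab⟩
  rcases eq_or_ne c 0 with rfl | hcne
  · have hpos : ∀ᶠ x in nhdsWithin a (Ioi a), F₀ x ∈ Ioi (0:ℝ) := by
      filter_upwards [hmem] with x hx using hF₀pos x hx
    have hF : Tendsto F₀ (nhdsWithin a (Ioi a)) (nhdsWithin 0 (Ioi 0)) :=
      tendsto_nhdsWithin_iff.mpr ⟨hFa, hpos⟩
    have h := (tendsto_log_mul_rpow_nhdsGT_zero (by linarith : (0:ℝ) < θ)).comp hF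
    refine h.congr ?_
    intro x
    simp [Function.comp, Phi]
    ring
  · have h := ((tendsto_rpow_a hab hFa hc).div_const c)
    rw [zero_div] at h
    refine h.congr' ?_
    filter_upwards [hmem] with x hx
    simp only [Phi, if_neg hcne]
    rw [Real.rpow_add (hF₀pos x hx)]
    ring

end Basic


section Helpers
variable {a b : ℝ} {F₀ f₀ : ℝ → ℝ}

lemma integral_congr_Ioo {f g : ℝ → ℝ} {s x : ℝ} (hsx : s ≤ x)
    (he : ∀ v ∈ Ioo s x, f v = g v) :
    ∫ v in s..x, f v = ∫ v in s..x, g v := by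
  rw [intervalIntegral.integral_of_le hsx, intervalIntegral.integral_of_le hsx,
    integral_Ioc_eq_integral_Ioo, integral_Ioc_eq_integral_Ioo]
  exact setIntegral_congr_fun measurableSet_Ioo he

lemma II_congr_Ioo {f g : ℝ → ℝ} {s x : ℝ} (hsx : s ≤ x)
    (he : ∀ v ∈ Ioo s x, f v = g v) (hg : IntegrableOn g (Ioc s x)) :
    IntervalIntegrable f volume s x := by
  rw [intervalIntegrable_iff_integrableOn_Ioc_of_le hsx]
  have hx0 : ∀ᵐ v : ℝ, v ≠ x := by
    refine ae_iff.mpr ?_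
    simpa using (measure_singleton x : (volume : Measure ℝ) {x} = 0)
  refine hg.congr ?_
  rw [Filter.EventuallyEq, ae_restrict_iff' measurableSet_Ioc]
  filter_upwards [hx0] with v hv hvI
  exact (he v ⟨hvI.1, lt_of_le_of_ne hvI.2 hv⟩).symm

/-- Improper FTC on `(a, x]` with antiderivative tending to `0` at `a⁺`. -/
lemma imp_lemma {G g : ℝ → ℝ} {x : ℝ} (hx : x ∈ Ioo a b)
    (hG : ∀ u ∈ Ioo a b, HasDerivAt G (g u) u)
    (hlim : Tendsto G (nhdsWithin a (Ioi a)) (nhds 0))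
    (hg0 : ∀ u ∈ Ioo a x, 0 ≤ g u) :
    IntegrableOn g (Ioc a x) ∧ ∫ u in a..x, g u = G x := by
  classical
  set Ge : ℝ → ℝ := fun u => if u ≤ a then 0 else G u with hGedef
  have hax : a < x := hx.1
  have hGeG : ∀ u ∈ Ioi a, Ge u = G u := fun u hu => if_neg (not_le.mpr hu)
  have hGed : ∀ u ∈ Ioo a x, HasDerivAt Ge (g u) u := by
    intro u hu
    have hu' : u ∈ Ioo a b := ⟨hu.1, hu.2.trans hx.2⟩
    refine (hG u hu').congr_of_eventuallyEq ?_
    filter_upwards [Ioi_mem_nhds hu.1] with t ht using hGeG t ht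
  have hGecont : ContinuousOn Ge (Icc a x) := by
    intro u hu
    rcases eq_or_lt_of_le hu.1 with rfl | hau
    · have h0 : Ge a = 0 := if_pos le_rfl
      rw [ContinuousWithinAt, h0]
      have hsub : Icc a x ⊆ insert a (Ioi a) := by
        intro t ht
        rcases eq_or_lt_of_le ht.1 with rfl | h
        · exact mem_insert _ _
        · exact mem_insert_of_mem _ h
      refine Filter.Tendsto.mono_left ?_ (nhdsWithin_mono _ hsub)
      rw [nhdsWithin_insert]
      refine Filter.Tendsto.sup ?_ ?_
      · have := tendsto_pure_nhds Ge a
        rwa [h0] at this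
      · refine hlim.congr' ?_
        filter_upwards [self_mem_nhdsWithin] with t ht using (hGeG t ht).symm
    · have hcA : ContinuousAt Ge u := by
        rcases lt_or_eq_of_le hu.2 with hux | rfl
        · exact (hGed u ⟨hau, hux⟩).continuousAt
        · refine (hG u hx).continuousAt.congr ?_
          filter_upwards [Ioi_mem_nhds hau] with t ht using (hGeG t ht).symm
      exact hcA.continuousWithinAt
  have hint : IntegrableOn g (Ioc a x) :=
    intervalIntegral.integrableOn_deriv_of_nonneg hGecont hGed hg0
  refine ⟨hint, ?_⟩
  have h := intervalIntegral.integral_eq_sub_of_hasDeriv_right_of_le hax.le hGecont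
    (fun u hu => (hGed u hu).hasDerivWithinAt)
    ((intervalIntegrable_iff_integrableOn_Ioc_of_le hax.le).mpr hint)
  rw [h, hGeG x hax, hGedef]
  simp

/-- Interior FTC on a closed subinterval of `(a,b)`. -/
lemma int_interior (hderiv : ∀ y ∈ Ioo a b, HasDerivAt F₀ (f₀ y) y)
    (hf₀cont : ContinuousOn f₀ (Ioo a b))
    (hF₀pos : ∀ y ∈ Ioo a b, 0 < F₀ y) (θ : ℝ) {s x : ℝ}
    (hs : s ∈ Ioo a b) (hx : x ∈ Ioo a b) (hsx : s ≤ x) :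
    IntervalIntegrable (fun v => f₀ v * F₀ v ^ (θ - 1)) volume s x ∧
      ∫ v in s..x, f₀ v * F₀ v ^ (θ - 1) = Phi F₀ θ x - Phi F₀ θ s := by
  have hsub : uIcc s x ⊆ Ioo a b := by
    rw [uIcc_of_le hsx]
    exact Icc_subset_Ioo hs.1 hx.2
  have hF₀cont : ContinuousOn F₀ (Ioo a b) :=
    fun y hy => (hderiv y hy).continuousAt.continuousWithinAt
  have hcont : ContinuousOn (fun v => f₀ v * F₀ v ^ (θ - 1)) (uIcc s x) := by
    refine (hf₀cont.mono hsub).mul ?_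
    exact (hF₀cont.mono hsub).rpow_const fun v hv => Or.inl (hF₀pos v (hsub hv)).ne'
  have hii : IntervalIntegrable (fun v => f₀ v * F₀ v ^ (θ - 1)) volume s x :=
    hcont.intervalIntegrable
  exact ⟨hii, intervalIntegral.integral_eq_sub_of_hasDerivAt
    (fun v hv => hasDerivAt_Phi hderiv hF₀pos θ (hsub hv)) hii⟩

end Helpers

noncomputable def dprh (a b : ℝ) (F₀ f₀ : ℝ → ℝ) (θ₁ θ₂ θ₁' θ₂' : ℝ) (y₁ y₂ : ℝ) : ℝ :=
  if a < y₁ ∧ y₁ < y₂ ∧ y₂ < b then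
    θ₁' * θ₂ * f₀ y₁ * f₀ y₂ * F₀ y₁ ^ (θ₁' - 1) * F₀ y₂ ^ (θ₁ + θ₂ - θ₁' - 1)
  else if a < y₂ ∧ y₂ < y₁ ∧ y₁ < b then
    θ₁ * θ₂' * f₀ y₁ * f₀ y₂ * F₀ y₁ ^ (θ₁ + θ₂ - θ₂' - 1) * F₀ y₂ ^ (θ₂' - 1)
  else 0

section Model
variable {a b : ℝ} {F₀ f₀ : ℝ → ℝ} {θ₁ θ₂ θ₁' θ₂' : ℝ}

lemma dprh_eq_lt {y₁ y₂ : ℝ} (h1 : a < y₁) (h2 : y₁ < y₂) (h3 : y₂ < b) :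
    dprh a b F₀ f₀ θ₁ θ₂ θ₁' θ₂' y₁ y₂ =
      θ₁' * θ₂ * f₀ y₁ * f₀ y₂ * F₀ y₁ ^ (θ₁' - 1) * F₀ y₂ ^ (θ₁ + θ₂ - θ₁' - 1) := by
  rw [dprh, if_pos ⟨h1, h2, h3⟩]

lemma dprh_eq_gt {y₁ y₂ : ℝ} (h1 : a < y₂) (h2 : y₂ < y₁) (h3 : y₁ < b) :
    dprh a b F₀ f₀ θ₁ θ₂ θ₁' θ₂' y₁ y₂ =
      θ₁ * θ₂' * f₀ y₁ * f₀ y₂ * F₀ y₁ ^ (θ₁ + θ₂ - θ₂' - 1) * F₀ y₂ ^ (θ₂' - 1) := by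
  rw [dprh, if_neg, if_pos ⟨h1, h2, h3⟩]
  rintro ⟨-, h, -⟩
  exact absurd h (not_lt.mpr h2.le)

lemma inner_lt (hab : a < b)
    (hderiv : ∀ y ∈ Ioo a b, HasDerivAt F₀ (f₀ y) y)
    (hf₀cont : ContinuousOn f₀ (Ioo a b))
    (hf₀pos : ∀ y ∈ Ioo a b, 0 < f₀ y)
    (hF₀pos : ∀ y ∈ Ioo a b, 0 < F₀ y)
    (hFa : Tendsto F₀ (nhdsWithin a (Ioi a)) (nhds 0))
    (hθ₂' : 0 < θ₂') {u y₂ : ℝ} (hu : u ∈ Ioo a b) (hy₂ : y₂ ∈ Ioo a b) (huy : u < y₂) :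
    ∫ v in a..y₂, dprh a b F₀ f₀ θ₁ θ₂ θ₁' θ₂' u v =
      θ₁ * f₀ u * F₀ u ^ (θ₁ + θ₂ - 1) +
        θ₁' * θ₂ * f₀ u * F₀ u ^ (θ₁' - 1) *
          (Phi F₀ (θ₁ + θ₂ - θ₁') y₂ - Phi F₀ (θ₁ + θ₂ - θ₁') u) := by
  have hupos := hF₀pos u hu
  have himp := imp_lemma (G := Phi F₀ θ₂') (g := fun v => f₀ v * F₀ v ^ (θ₂' - 1)) hu
    (fun w hw => hasDerivAt_Phi hderiv hF₀pos θ₂' hw)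
    (tendsto_Phi_a hab hFa hθ₂')
    (fun v hv => le_of_lt (mul_pos (hf₀pos v ⟨hv.1, hv.2.trans hu.2⟩)
      (Real.rpow_pos_of_pos (hF₀pos v ⟨hv.1, hv.2.trans hu.2⟩) _)))
  have he2 : ∀ v ∈ Ioo a u, dprh a b F₀ f₀ θ₁ θ₂ θ₁' θ₂' u v =
      (θ₁ * θ₂' * f₀ u * F₀ u ^ (θ₁ + θ₂ - θ₂' - 1)) * (f₀ v * F₀ v ^ (θ₂' - 1)) := by
    intro v hv
    rw [dprh_eq_gt hv.1 hv.2 hu.2]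
    ring
  have hint2 : IntervalIntegrable (fun v => dprh a b F₀ f₀ θ₁ θ₂ θ₁' θ₂' u v) volume a u :=
    II_congr_Ioo hu.1.le he2 (himp.1.const_mul _)
  have hval2 : ∫ v in a..u, dprh a b F₀ f₀ θ₁ θ₂ θ₁' θ₂' u v =
      θ₁ * f₀ u * F₀ u ^ (θ₁ + θ₂ - 1) := by
    rw [integral_congr_Ioo hu.1.le he2, intervalIntegral.integral_const_mul, himp.2]
    have hPhi : Phi F₀ θ₂' u = F₀ u ^ θ₂' / θ₂' := by simp [Phi, hθ₂'.ne']
    rw [hPhi, show θ₁ * θ₂' * f₀ u * F₀ u ^ (θ₁ + θ₂ - θ₂' - 1) * (F₀ u ^ θ₂' / θ₂')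
        = θ₁ * f₀ u * (F₀ u ^ (θ₁ + θ₂ - θ₂' - 1) * F₀ u ^ θ₂') by
      field_simp]
    rw [← Real.rpow_add hupos, show θ₁ + θ₂ - θ₂' - 1 + θ₂' = θ₁ + θ₂ - 1 by ring]
  have hintr := int_interior hderiv hf₀cont hF₀pos (θ₁ + θ₂ - θ₁') hu hy₂ huy.le
  have he1 : ∀ v ∈ Ioo u y₂, dprh a b F₀ f₀ θ₁ θ₂ θ₁' θ₂' u v =
      (θ₁' * θ₂ * f₀ u * F₀ u ^ (θ₁' - 1)) * (f₀ v * F₀ v ^ (θ₁ + θ₂ - θ₁' - 1)) := by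
    intro v hv
    rw [dprh_eq_lt hu.1 hv.1 (hv.2.trans hy₂.2)]
    ring
  have hint1 : IntervalIntegrable (fun v => dprh a b F₀ f₀ θ₁ θ₂ θ₁' θ₂' u v) volume u y₂ :=
    II_congr_Ioo huy.le he1
      ((intervalIntegrable_iff_integrableOn_Ioc_of_le huy.le).mp (hintr.1.const_mul _))
  have hval1 : ∫ v in u..y₂, dprh a b F₀ f₀ θ₁ θ₂ θ₁' θ₂' u v =
      θ₁' * θ₂ * f₀ u * F₀ u ^ (θ₁' - 1) *
        (Phi F₀ (θ₁ + θ₂ - θ₁') y₂ - Phi F₀ (θ₁ + θ₂ - θ₁') u) := by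
    rw [integral_congr_Ioo huy.le he1, intervalIntegral.integral_const_mul, hintr.2]
  rw [← intervalIntegral.integral_add_adjacent_intervals hint2 hint1, hval2, hval1]

lemma inner_ge (hab : a < b)
    (hderiv : ∀ y ∈ Ioo a b, HasDerivAt F₀ (f₀ y) y)
    (hf₀pos : ∀ y ∈ Ioo a b, 0 < f₀ y)
    (hF₀pos : ∀ y ∈ Ioo a b, 0 < F₀ y)
    (hFa : Tendsto F₀ (nhdsWithin a (Ioi a)) (nhds 0))
    (hθ₂' : 0 < θ₂') {u y₂ : ℝ} (hu : u ∈ Ioo a b) (hy₂ : y₂ ∈ Ioo a b) (hyu : y₂ ≤ u) :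
    ∫ v in a..y₂, dprh a b F₀ f₀ θ₁ θ₂ θ₁' θ₂' u v =
      θ₁ * f₀ u * F₀ u ^ (θ₁ + θ₂ - θ₂' - 1) * F₀ y₂ ^ θ₂' := by
  have himp := imp_lemma (G := Phi F₀ θ₂') (g := fun v => f₀ v * F₀ v ^ (θ₂' - 1)) hy₂
    (fun w hw => hasDerivAt_Phi hderiv hF₀pos θ₂' hw)
    (tendsto_Phi_a hab hFa hθ₂')
    (fun v hv => le_of_lt (mul_pos (hf₀pos v ⟨hv.1, hv.2.trans hy₂.2⟩)
      (Real.rpow_pos_of_pos (hF₀pos v ⟨hv.1, hv.2.trans hy₂.2⟩) _)))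
  have he2 : ∀ v ∈ Ioo a y₂, dprh a b F₀ f₀ θ₁ θ₂ θ₁' θ₂' u v =
      (θ₁ * θ₂' * f₀ u * F₀ u ^ (θ₁ + θ₂ - θ₂' - 1)) * (f₀ v * F₀ v ^ (θ₂' - 1)) := by
    intro v hv
    rw [dprh_eq_gt hv.1 (hv.2.trans_le hyu) hu.2]
    ring
  rw [integral_congr_Ioo hy₂.1.le he2, intervalIntegral.integral_const_mul, himp.2]
  have hPhi : Phi F₀ θ₂' y₂ = F₀ y₂ ^ θ₂' / θ₂' := by simp [Phi, hθ₂'.ne']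
  rw [hPhi]
  field_simp

lemma hasDerivAt_G
    (hderiv : ∀ y ∈ Ioo a b, HasDerivAt F₀ (f₀ y) y)
    (hF₀pos : ∀ y ∈ Ioo a b, 0 < F₀ y)
    (K' m θ' c A : ℝ) {w : ℝ} (hw : w ∈ Ioo a b) :
    HasDerivAt (fun s => F₀ s ^ K' + m * F₀ s ^ θ' * (A - Phi F₀ c s))
      (f₀ w * K' * F₀ w ^ (K' - 1) + m * (f₀ w * θ' * F₀ w ^ (θ' - 1)) * (A - Phi F₀ c w)
        - m * F₀ w ^ θ' * (f₀ w * F₀ w ^ (c - 1))) w := by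
  have hne := (hF₀pos w hw).ne'
  have d1 : HasDerivAt (fun s => F₀ s ^ K') (f₀ w * K' * F₀ w ^ (K' - 1)) w :=
    (hderiv w hw).rpow_const (Or.inl hne)
  have d2 : HasDerivAt (fun s => F₀ s ^ θ') (f₀ w * θ' * F₀ w ^ (θ' - 1)) w :=
    (hderiv w hw).rpow_const (Or.inl hne)
  have d3 : HasDerivAt (fun s => A - Phi F₀ c s) (-(f₀ w * F₀ w ^ (c - 1))) w :=
    (hasDerivAt_Phi hderiv hF₀pos c hw).const_sub A
  have d4 := (d2.const_mul m).mul d3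
  have d5 := d1.add d4
  exact d5.congr_deriv (by ring)
end Model

section Outer
variable {a b : ℝ} {F₀ f₀ : ℝ → ℝ} {θ₁ θ₂ θ₁' θ₂' : ℝ}

lemma outer_le (hab : a < b)
    (hderiv : ∀ y ∈ Ioo a b, HasDerivAt F₀ (f₀ y) y)
    (hf₀cont : ContinuousOn f₀ (Ioo a b))
    (hf₀pos : ∀ y ∈ Ioo a b, 0 < f₀ y)
    (hF₀pos : ∀ y ∈ Ioo a b, 0 < F₀ y)
    (hFa : Tendsto F₀ (nhdsWithin a (Ioi a)) (nhds 0))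
    (hθ₁ : 0 < θ₁) (hθ₂ : 0 < θ₂) (hθ₁' : 0 < θ₁') (hθ₂' : 0 < θ₂')
    {y₁ y₂ : ℝ} (h1 : y₁ ∈ Ioo a b) (h2 : y₂ ∈ Ioo a b) (h12 : y₁ ≤ y₂) :
    IntervalIntegrable (fun u => ∫ v in a..y₂, dprh a b F₀ f₀ θ₁ θ₂ θ₁' θ₂' u v) volume a y₁ ∧
      ∫ u in a..y₁, (∫ v in a..y₂, dprh a b F₀ f₀ θ₁ θ₂ θ₁' θ₂' u v) =
        F₀ y₁ ^ (θ₁ + θ₂) + θ₂ * F₀ y₁ ^ θ₁' *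
          (Phi F₀ (θ₁ + θ₂ - θ₁') y₂ - Phi F₀ (θ₁ + θ₂ - θ₁') y₁) := by
  set c : ℝ := θ₁ + θ₂ - θ₁' with hc
  have hK : (0:ℝ) < θ₁ + θ₂ := by linarith
  set g : ℝ → ℝ := fun u => θ₁ * f₀ u * F₀ u ^ (θ₁ + θ₂ - 1) +
      θ₁' * θ₂ * f₀ u * F₀ u ^ (θ₁' - 1) * (Phi F₀ c y₂ - Phi F₀ c u) with hg
  have hGd : ∀ w ∈ Ioo a b, HasDerivAt
      (fun s => F₀ s ^ (θ₁ + θ₂) + θ₂ * F₀ s ^ θ₁' * (Phi F₀ c y₂ - Phi F₀ c s)) (g w) w := by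
    intro w hw
    have h := hasDerivAt_G hderiv hF₀pos (θ₁ + θ₂) θ₂ θ₁' c (Phi F₀ c y₂) hw
    convert h using 1
    have hxp : F₀ w ^ θ₁' * F₀ w ^ (c - 1) = F₀ w ^ (θ₁ + θ₂ - 1) := by
      rw [← Real.rpow_add (hF₀pos w hw)]
      congr 1
      rw [hc]; ring
    rw [hg]
    simp only []
    linear_combination (θ₂ * f₀ w) * hxp
  have hlim : Tendsto (fun s => F₀ s ^ (θ₁ + θ₂) + θ₂ * F₀ s ^ θ₁' * (Phi F₀ c y₂ - Phi F₀ c s))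
      (nhdsWithin a (Ioi a)) (nhds 0) := by
    have t1 := tendsto_rpow_a hab hFa hK
    have t2 := (tendsto_rpow_a hab hFa hθ₁').const_mul (θ₂ * Phi F₀ c y₂)
    have t3 := (tendsto_psi_a hab hF₀pos hFa hθ₁'
      (show (0:ℝ) < θ₁' + c by rw [hc]; linarith)).const_mul θ₂
    have t := (t1.add t2).sub t3
    simp only [mul_zero, add_zero, sub_zero] at t
    refine t.congr (fun s => ?_)
    ring
  have hg0 : ∀ u ∈ Ioo a y₁, 0 ≤ g u := by
    intro u hu
    have hu' : u ∈ Ioo a b := ⟨hu.1, hu.2.trans h1.2⟩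
    have hfp := hf₀pos u hu'
    have e1 : 0 < F₀ u ^ (θ₁ + θ₂ - 1) := Real.rpow_pos_of_pos (hF₀pos u hu') _
    have e2 : 0 < F₀ u ^ (θ₁' - 1) := Real.rpow_pos_of_pos (hF₀pos u hu') _
    have e3 : 0 ≤ Phi F₀ c y₂ - Phi F₀ c u := by
      rcases eq_or_lt_of_le (hu.2.le.trans h12) with heq | hlt
      · rw [heq]; simp
      · exact (sub_nonneg.mpr ((Phi_strictMono hderiv hf₀pos hF₀pos c) hu' h2 hlt).le)
    rw [hg]
    have m1 : 0 ≤ θ₁ * f₀ u * F₀ u ^ (θ₁ + θ₂ - 1) :=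
      le_of_lt (mul_pos (mul_pos hθ₁ hfp) e1)
    have m2 : 0 ≤ θ₁' * θ₂ * f₀ u * F₀ u ^ (θ₁' - 1) * (Phi F₀ c y₂ - Phi F₀ c u) :=
      mul_nonneg (le_of_lt (mul_pos (mul_pos (mul_pos hθ₁' hθ₂) hfp) e2)) e3
    exact add_nonneg m1 m2
  have himp := imp_lemma h1 hGd hlim hg0
  have he : ∀ u ∈ Ioo a y₁, (∫ v in a..y₂, dprh a b F₀ f₀ θ₁ θ₂ θ₁' θ₂' u v) = g u := by
    intro u hu
    have hu' : u ∈ Ioo a b := ⟨hu.1, hu.2.trans h1.2⟩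
    exact inner_lt hab hderiv hf₀cont hf₀pos hF₀pos hFa hθ₂' hu' h2 (lt_of_lt_of_le hu.2 h12)
  exact ⟨II_congr_Ioo h1.1.le he himp.1,
    by rw [integral_congr_Ioo h1.1.le he, himp.2]⟩

lemma outer_gt (hab : a < b)
    (hderiv : ∀ y ∈ Ioo a b, HasDerivAt F₀ (f₀ y) y)
    (hf₀cont : ContinuousOn f₀ (Ioo a b))
    (hf₀pos : ∀ y ∈ Ioo a b, 0 < f₀ y)
    (hF₀pos : ∀ y ∈ Ioo a b, 0 < F₀ y)
    (hFa : Tendsto F₀ (nhdsWithin a (Ioi a)) (nhds 0))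
    (hθ₁ : 0 < θ₁) (hθ₂ : 0 < θ₂) (hθ₁' : 0 < θ₁') (hθ₂' : 0 < θ₂')
    {y₁ y₂ : ℝ} (h1 : y₁ ∈ Ioo a b) (h2 : y₂ ∈ Ioo a b) (h21 : y₂ < y₁) :
    ∫ u in a..y₁, (∫ v in a..y₂, dprh a b F₀ f₀ θ₁ θ₂ θ₁' θ₂' u v) =
      F₀ y₂ ^ (θ₁ + θ₂) + θ₁ * F₀ y₂ ^ θ₂' *
        (Phi F₀ (θ₁ + θ₂ - θ₂') y₁ - Phi F₀ (θ₁ + θ₂ - θ₂') y₂) := by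
  obtain ⟨hii1, hval1⟩ := outer_le hab hderiv hf₀cont hf₀pos hF₀pos hFa hθ₁ hθ₂ hθ₁' hθ₂'
    h2 h2 le_rfl
  have he : ∀ u ∈ Ioo y₂ y₁, (∫ v in a..y₂, dprh a b F₀ f₀ θ₁ θ₂ θ₁' θ₂' u v) =
      (θ₁ * F₀ y₂ ^ θ₂') * (f₀ u * F₀ u ^ (θ₁ + θ₂ - θ₂' - 1)) := by
    intro u hu
    have hu' : u ∈ Ioo a b := ⟨h2.1.trans hu.1, hu.2.trans h1.2⟩
    rw [inner_ge hab hderiv hf₀pos hF₀pos hFa hθ₂' hu' h2 hu.1.le]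
    ring
  have hintr := int_interior hderiv hf₀cont hF₀pos (θ₁ + θ₂ - θ₂') h2 h1 h21.le
  have hii2 : IntervalIntegrable (fun u => ∫ v in a..y₂, dprh a b F₀ f₀ θ₁ θ₂ θ₁' θ₂' u v)
      volume y₂ y₁ :=
    II_congr_Ioo h21.le he
      ((intervalIntegrable_iff_integrableOn_Ioc_of_le h21.le).mp (hintr.1.const_mul _))
  rw [← intervalIntegral.integral_add_adjacent_intervals hii1 hii2, hval1,
    integral_congr_Ioo h21.le he, intervalIntegral.integral_const_mul, hintr.2]
  ring
end Outer

section Key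
variable {a b : ℝ} {F₀ f₀ : ℝ → ℝ} {θ₁ θ₂ θ₁' θ₂' : ℝ}

lemma key1 (hab : a < b)
    (hderiv : ∀ y ∈ Ioo a b, HasDerivAt F₀ (f₀ y) y)
    (hf₀cont : ContinuousOn f₀ (Ioo a b))
    (hf₀pos : ∀ y ∈ Ioo a b, 0 < f₀ y)
    (hF₀pos : ∀ y ∈ Ioo a b, 0 < F₀ y)
    (hFa : Tendsto F₀ (nhdsWithin a (Ioi a)) (nhds 0))
    (hθ₁ : 0 < θ₁) (hθ₂ : 0 < θ₂) (hθ₁' : 0 < θ₁') (hθ₂' : 0 < θ₂')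
    {y₁ y₂ : ℝ} (h1 : y₁ ∈ Ioo a b) (h2 : y₂ ∈ Ioo a b) (h12 : y₁ < y₂) :
    ((∫ u in a..y₁, ∫ v in a..y₂, dprh a b F₀ f₀ θ₁ θ₂ θ₁' θ₂' u v) *
        dprh a b F₀ f₀ θ₁ θ₂ θ₁' θ₂' y₁ y₂ /
      (deriv (fun s => ∫ u in a..s, ∫ v in a..y₂, dprh a b F₀ f₀ θ₁ θ₂ θ₁' θ₂' u v) y₁ *
        deriv (fun t => ∫ u in a..y₁, ∫ v in a..t, dprh a b F₀ f₀ θ₁ θ₂ θ₁' θ₂' u v) y₂) = 1)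
      ↔ θ₁ = θ₁' := by
  have hp := hF₀pos y₁ h1
  have hq := hF₀pos y₂ h2
  have hf1 := hf₀pos y₁ h1
  have hf2 := hf₀pos y₂ h2
  have hD0 : 0 ≤ Phi F₀ (θ₁ + θ₂ - θ₁') y₂ - Phi F₀ (θ₁ + θ₂ - θ₁') y₁ :=
    sub_nonneg.mpr ((Phi_strictMono hderiv hf₀pos hF₀pos _) h1 h2 h12).le
  have hF : (∫ u in a..y₁, ∫ v in a..y₂, dprh a b F₀ f₀ θ₁ θ₂ θ₁' θ₂' u v) =
      F₀ y₁ ^ (θ₁ + θ₂) + θ₂ * F₀ y₁ ^ θ₁' *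
        (Phi F₀ (θ₁ + θ₂ - θ₁') y₂ - Phi F₀ (θ₁ + θ₂ - θ₁') y₁) :=
    (outer_le hab hderiv hf₀cont hf₀pos hF₀pos hFa hθ₁ hθ₂ hθ₁' hθ₂' h1 h2 h12.le).2
  have hf : dprh a b F₀ f₀ θ₁ θ₂ θ₁' θ₂' y₁ y₂ =
      θ₁' * θ₂ * f₀ y₁ * f₀ y₂ * F₀ y₁ ^ (θ₁' - 1) * F₀ y₂ ^ (θ₁ + θ₂ - θ₁' - 1) :=
    dprh_eq_lt h1.1 h12 h2.2
  have hd1 : deriv (fun s => ∫ u in a..s, ∫ v in a..y₂, dprh a b F₀ f₀ θ₁ θ₂ θ₁' θ₂' u v) y₁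
      = f₀ y₁ * θ₁ * F₀ y₁ ^ (θ₁ + θ₂ - 1) + θ₁' * θ₂ * f₀ y₁ * F₀ y₁ ^ (θ₁' - 1) *
        (Phi F₀ (θ₁ + θ₂ - θ₁') y₂ - Phi F₀ (θ₁ + θ₂ - θ₁') y₁) := by
    have heq : (fun s => ∫ u in a..s, ∫ v in a..y₂, dprh a b F₀ f₀ θ₁ θ₂ θ₁' θ₂' u v) =ᶠ[nhds y₁]
        (fun s => F₀ s ^ (θ₁ + θ₂) + θ₂ * F₀ s ^ θ₁' *
          (Phi F₀ (θ₁ + θ₂ - θ₁') y₂ - Phi F₀ (θ₁ + θ₂ - θ₁') s)) := by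
      filter_upwards [Ioo_mem_nhds h1.1 h12] with s hs
      exact (outer_le hab hderiv hf₀cont hf₀pos hF₀pos hFa hθ₁ hθ₂ hθ₁' hθ₂'
        ⟨hs.1, hs.2.trans h2.2⟩ h2 hs.2.le).2
    rw [heq.deriv_eq,
      (hasDerivAt_G hderiv hF₀pos (θ₁ + θ₂) θ₂ θ₁' (θ₁ + θ₂ - θ₁')
        (Phi F₀ (θ₁ + θ₂ - θ₁') y₂) h1).deriv]
    have hxp : F₀ y₁ ^ θ₁' * F₀ y₁ ^ (θ₁ + θ₂ - θ₁' - 1) = F₀ y₁ ^ (θ₁ + θ₂ - 1) := by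
      rw [← Real.rpow_add hp]; congr 1; ring
    linear_combination (-θ₂ * f₀ y₁) * hxp
  have hd2 : deriv (fun t => ∫ u in a..y₁, ∫ v in a..t, dprh a b F₀ f₀ θ₁ θ₂ θ₁' θ₂' u v) y₂
      = θ₂ * F₀ y₁ ^ θ₁' * (f₀ y₂ * F₀ y₂ ^ (θ₁ + θ₂ - θ₁' - 1)) := by
    have heq : (fun t => ∫ u in a..y₁, ∫ v in a..t, dprh a b F₀ f₀ θ₁ θ₂ θ₁' θ₂' u v) =ᶠ[nhds y₂]
        (fun t => F₀ y₁ ^ (θ₁ + θ₂) + θ₂ * F₀ y₁ ^ θ₁' *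
          (Phi F₀ (θ₁ + θ₂ - θ₁') t - Phi F₀ (θ₁ + θ₂ - θ₁') y₁)) := by
      filter_upwards [Ioo_mem_nhds h12 h2.2] with t ht
      exact (outer_le hab hderiv hf₀cont hf₀pos hF₀pos hFa hθ₁ hθ₂ hθ₁' hθ₂'
        h1 ⟨h1.1.trans ht.1, ht.2⟩ ht.1.le).2
    rw [heq.deriv_eq]
    exact ((((hasDerivAt_Phi hderiv hF₀pos (θ₁ + θ₂ - θ₁') h2).sub_const
      (Phi F₀ (θ₁ + θ₂ - θ₁') y₁)).const_mul (θ₂ * F₀ y₁ ^ θ₁')).const_add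
      (F₀ y₁ ^ (θ₁ + θ₂))).deriv
  rw [hF, hf, hd1, hd2]
  have e1 : F₀ y₁ ^ (θ₁ + θ₂) * F₀ y₁ ^ (θ₁' - 1) = F₀ y₁ ^ (θ₁ + θ₂ + θ₁' - 1) := by
    rw [← Real.rpow_add hp]; congr 1; ring
  have e2 : F₀ y₁ ^ (θ₁ + θ₂ - 1) * F₀ y₁ ^ θ₁' = F₀ y₁ ^ (θ₁ + θ₂ + θ₁' - 1) := by
    rw [← Real.rpow_add hp]; congr 1; ring
  have hqc : 0 < F₀ y₂ ^ (θ₁ + θ₂ - θ₁' - 1) := Real.rpow_pos_of_pos hq _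
  have hp1 : 0 < F₀ y₁ ^ θ₁' := Real.rpow_pos_of_pos hp _
  have hp2 : 0 < F₀ y₁ ^ (θ₁' - 1) := Real.rpow_pos_of_pos hp _
  have hpK : 0 < F₀ y₁ ^ (θ₁ + θ₂ - 1) := Real.rpow_pos_of_pos hp _
  have hR : 0 < F₀ y₁ ^ (θ₁ + θ₂ + θ₁' - 1) := Real.rpow_pos_of_pos hp _
  have hden : 0 < (f₀ y₁ * θ₁ * F₀ y₁ ^ (θ₁ + θ₂ - 1) + θ₁' * θ₂ * f₀ y₁ * F₀ y₁ ^ (θ₁' - 1) *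
        (Phi F₀ (θ₁ + θ₂ - θ₁') y₂ - Phi F₀ (θ₁ + θ₂ - θ₁') y₁)) *
      (θ₂ * F₀ y₁ ^ θ₁' * (f₀ y₂ * F₀ y₂ ^ (θ₁ + θ₂ - θ₁' - 1))) := by
    apply mul_pos
    · have m1 : 0 < f₀ y₁ * θ₁ * F₀ y₁ ^ (θ₁ + θ₂ - 1) := mul_pos (mul_pos hf1 hθ₁) hpK
      nlinarith [mul_nonneg (mul_nonneg (mul_nonneg (mul_nonneg hθ₁'.le hθ₂.le) hf1.le)
        hp2.le) hD0]
    · exact mul_pos (mul_pos hθ₂ hp1) (mul_pos hf2 hqc)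
  rw [div_eq_one_iff_eq hden.ne']
  constructor
  · intro h
    have key : (θ₁' - θ₁) * (F₀ y₁ ^ (θ₁ + θ₂ + θ₁' - 1) *
        (θ₂ * f₀ y₁ * f₀ y₂ * F₀ y₂ ^ (θ₁ + θ₂ - θ₁' - 1))) = 0 := by
      linear_combination h - (θ₁' * θ₂ * f₀ y₁ * f₀ y₂ * F₀ y₂ ^ (θ₁ + θ₂ - θ₁' - 1)) * e1
        + (θ₁ * θ₂ * f₀ y₁ * f₀ y₂ * F₀ y₂ ^ (θ₁ + θ₂ - θ₁' - 1)) * e2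
    have hpos : 0 < F₀ y₁ ^ (θ₁ + θ₂ + θ₁' - 1) *
        (θ₂ * f₀ y₁ * f₀ y₂ * F₀ y₂ ^ (θ₁ + θ₂ - θ₁' - 1)) :=
      mul_pos hR (mul_pos (mul_pos (mul_pos hθ₂ hf1) hf2) hqc)
    have h0 := (mul_eq_zero.mp key).resolve_right hpos.ne'
    exact (sub_eq_zero.mp h0).symm
  · intro h
    linear_combination (θ₁' * θ₂ * f₀ y₁ * f₀ y₂ * F₀ y₂ ^ (θ₁ + θ₂ - θ₁' - 1)) * e1
      - (θ₁ * θ₂ * f₀ y₁ * f₀ y₂ * F₀ y₂ ^ (θ₁ + θ₂ - θ₁' - 1)) * e2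
      - (θ₂ * f₀ y₁ * f₀ y₂ * F₀ y₂ ^ (θ₁ + θ₂ - θ₁' - 1) * F₀ y₁ ^ (θ₁ + θ₂ + θ₁' - 1)) * h
end Key

section Key2
variable {a b : ℝ} {F₀ f₀ : ℝ → ℝ} {θ₁ θ₂ θ₁' θ₂' : ℝ}

lemma key2 (hab : a < b)
    (hderiv : ∀ y ∈ Ioo a b, HasDerivAt F₀ (f₀ y) y)
    (hf₀cont : ContinuousOn f₀ (Ioo a b))
    (hf₀pos : ∀ y ∈ Ioo a b, 0 < f₀ y)
    (hF₀pos : ∀ y ∈ Ioo a b, 0 < F₀ y)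
    (hFa : Tendsto F₀ (nhdsWithin a (Ioi a)) (nhds 0))
    (hθ₁ : 0 < θ₁) (hθ₂ : 0 < θ₂) (hθ₁' : 0 < θ₁') (hθ₂' : 0 < θ₂')
    {y₁ y₂ : ℝ} (h1 : y₁ ∈ Ioo a b) (h2 : y₂ ∈ Ioo a b) (h21 : y₂ < y₁) :
    ((∫ u in a..y₁, ∫ v in a..y₂, dprh a b F₀ f₀ θ₁ θ₂ θ₁' θ₂' u v) *
        dprh a b F₀ f₀ θ₁ θ₂ θ₁' θ₂' y₁ y₂ /
      (deriv (fun s => ∫ u in a..s, ∫ v in a..y₂, dprh a b F₀ f₀ θ₁ θ₂ θ₁' θ₂' u v) y₁ *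
        deriv (fun t => ∫ u in a..y₁, ∫ v in a..t, dprh a b F₀ f₀ θ₁ θ₂ θ₁' θ₂' u v) y₂) = 1)
      ↔ θ₂ = θ₂' := by
  have hp := hF₀pos y₁ h1
  have hq := hF₀pos y₂ h2
  have hf1 := hf₀pos y₁ h1
  have hf2 := hf₀pos y₂ h2
  have hD0 : 0 ≤ Phi F₀ (θ₁ + θ₂ - θ₂') y₁ - Phi F₀ (θ₁ + θ₂ - θ₂') y₂ :=
    sub_nonneg.mpr ((Phi_strictMono hderiv hf₀pos hF₀pos _) h2 h1 h21).le
  have hF : (∫ u in a..y₁, ∫ v in a..y₂, dprh a b F₀ f₀ θ₁ θ₂ θ₁' θ₂' u v) =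
      F₀ y₂ ^ (θ₁ + θ₂) + θ₁ * F₀ y₂ ^ θ₂' *
        (Phi F₀ (θ₁ + θ₂ - θ₂') y₁ - Phi F₀ (θ₁ + θ₂ - θ₂') y₂) :=
    outer_gt hab hderiv hf₀cont hf₀pos hF₀pos hFa hθ₁ hθ₂ hθ₁' hθ₂' h1 h2 h21
  have hf : dprh a b F₀ f₀ θ₁ θ₂ θ₁' θ₂' y₁ y₂ =
      θ₁ * θ₂' * f₀ y₁ * f₀ y₂ * F₀ y₁ ^ (θ₁ + θ₂ - θ₂' - 1) * F₀ y₂ ^ (θ₂' - 1) :=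
    dprh_eq_gt h2.1 h21 h1.2
  have hd1 : deriv (fun s => ∫ u in a..s, ∫ v in a..y₂, dprh a b F₀ f₀ θ₁ θ₂ θ₁' θ₂' u v) y₁
      = θ₁ * F₀ y₂ ^ θ₂' * (f₀ y₁ * F₀ y₁ ^ (θ₁ + θ₂ - θ₂' - 1)) := by
    have heq : (fun s => ∫ u in a..s, ∫ v in a..y₂, dprh a b F₀ f₀ θ₁ θ₂ θ₁' θ₂' u v) =ᶠ[nhds y₁]
        (fun s => F₀ y₂ ^ (θ₁ + θ₂) + θ₁ * F₀ y₂ ^ θ₂' *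
          (Phi F₀ (θ₁ + θ₂ - θ₂') s - Phi F₀ (θ₁ + θ₂ - θ₂') y₂)) := by
      filter_upwards [Ioo_mem_nhds h21 h1.2] with s hs
      exact outer_gt hab hderiv hf₀cont hf₀pos hF₀pos hFa hθ₁ hθ₂ hθ₁' hθ₂'
        ⟨h2.1.trans hs.1, hs.2⟩ h2 hs.1
    rw [heq.deriv_eq]
    exact ((((hasDerivAt_Phi hderiv hF₀pos (θ₁ + θ₂ - θ₂') h1).sub_const
      (Phi F₀ (θ₁ + θ₂ - θ₂') y₂)).const_mul (θ₁ * F₀ y₂ ^ θ₂')).const_add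
      (F₀ y₂ ^ (θ₁ + θ₂))).deriv
  have hd2 : deriv (fun t => ∫ u in a..y₁, ∫ v in a..t, dprh a b F₀ f₀ θ₁ θ₂ θ₁' θ₂' u v) y₂
      = f₀ y₂ * θ₂ * F₀ y₂ ^ (θ₁ + θ₂ - 1) + θ₁ * θ₂' * f₀ y₂ * F₀ y₂ ^ (θ₂' - 1) *
        (Phi F₀ (θ₁ + θ₂ - θ₂') y₁ - Phi F₀ (θ₁ + θ₂ - θ₂') y₂) := by
    have heq : (fun t => ∫ u in a..y₁, ∫ v in a..t, dprh a b F₀ f₀ θ₁ θ₂ θ₁' θ₂' u v) =ᶠ[nhds y₂]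
        (fun t => F₀ t ^ (θ₁ + θ₂) + θ₁ * F₀ t ^ θ₂' *
          (Phi F₀ (θ₁ + θ₂ - θ₂') y₁ - Phi F₀ (θ₁ + θ₂ - θ₂') t)) := by
      filter_upwards [Ioo_mem_nhds h2.1 h21] with t ht
      exact outer_gt hab hderiv hf₀cont hf₀pos hF₀pos hFa hθ₁ hθ₂ hθ₁' hθ₂'
        h1 ⟨ht.1, ht.2.trans h1.2⟩ ht.2
    rw [heq.deriv_eq,
      (hasDerivAt_G hderiv hF₀pos (θ₁ + θ₂) θ₁ θ₂' (θ₁ + θ₂ - θ₂')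
        (Phi F₀ (θ₁ + θ₂ - θ₂') y₁) h2).deriv]
    have hxp : F₀ y₂ ^ θ₂' * F₀ y₂ ^ (θ₁ + θ₂ - θ₂' - 1) = F₀ y₂ ^ (θ₁ + θ₂ - 1) := by
      rw [← Real.rpow_add hq]; congr 1; ring
    linear_combination (-θ₁ * f₀ y₂) * hxp
  rw [hF, hf, hd1, hd2]
  have e1 : F₀ y₂ ^ (θ₁ + θ₂) * F₀ y₂ ^ (θ₂' - 1) = F₀ y₂ ^ (θ₁ + θ₂ + θ₂' - 1) := by
    rw [← Real.rpow_add hq]; congr 1; ring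
  have e2 : F₀ y₂ ^ (θ₁ + θ₂ - 1) * F₀ y₂ ^ θ₂' = F₀ y₂ ^ (θ₁ + θ₂ + θ₂' - 1) := by
    rw [← Real.rpow_add hq]; congr 1; ring
  have hpc : 0 < F₀ y₁ ^ (θ₁ + θ₂ - θ₂' - 1) := Real.rpow_pos_of_pos hp _
  have hq1 : 0 < F₀ y₂ ^ θ₂' := Real.rpow_pos_of_pos hq _
  have hq2 : 0 < F₀ y₂ ^ (θ₂' - 1) := Real.rpow_pos_of_pos hq _
  have hqK : 0 < F₀ y₂ ^ (θ₁ + θ₂ - 1) := Real.rpow_pos_of_pos hq _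
  have hR : 0 < F₀ y₂ ^ (θ₁ + θ₂ + θ₂' - 1) := Real.rpow_pos_of_pos hq _
  have hden : 0 < (θ₁ * F₀ y₂ ^ θ₂' * (f₀ y₁ * F₀ y₁ ^ (θ₁ + θ₂ - θ₂' - 1))) *
      (f₀ y₂ * θ₂ * F₀ y₂ ^ (θ₁ + θ₂ - 1) + θ₁ * θ₂' * f₀ y₂ * F₀ y₂ ^ (θ₂' - 1) *
        (Phi F₀ (θ₁ + θ₂ - θ₂') y₁ - Phi F₀ (θ₁ + θ₂ - θ₂') y₂)) := by
    apply mul_pos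
    · exact mul_pos (mul_pos hθ₁ hq1) (mul_pos hf1 hpc)
    · have m1 : 0 < f₀ y₂ * θ₂ * F₀ y₂ ^ (θ₁ + θ₂ - 1) := mul_pos (mul_pos hf2 hθ₂) hqK
      nlinarith [mul_nonneg (mul_nonneg (mul_nonneg (mul_nonneg hθ₁.le hθ₂'.le) hf2.le)
        hq2.le) hD0]
  rw [div_eq_one_iff_eq hden.ne']
  constructor
  · intro h
    have key : (θ₂' - θ₂) * (F₀ y₂ ^ (θ₁ + θ₂ + θ₂' - 1) *
        (θ₁ * f₀ y₁ * f₀ y₂ * F₀ y₁ ^ (θ₁ + θ₂ - θ₂' - 1))) = 0 := by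
      linear_combination h - (θ₁ * θ₂' * f₀ y₁ * f₀ y₂ * F₀ y₁ ^ (θ₁ + θ₂ - θ₂' - 1)) * e1
        + (θ₁ * θ₂ * f₀ y₁ * f₀ y₂ * F₀ y₁ ^ (θ₁ + θ₂ - θ₂' - 1)) * e2
    have hpos : 0 < F₀ y₂ ^ (θ₁ + θ₂ + θ₂' - 1) *
        (θ₁ * f₀ y₁ * f₀ y₂ * F₀ y₁ ^ (θ₁ + θ₂ - θ₂' - 1)) :=
      mul_pos hR (mul_pos (mul_pos (mul_pos hθ₁ hf1) hf2) hpc)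
    have h0 := (mul_eq_zero.mp key).resolve_right hpos.ne'
    exact (sub_eq_zero.mp h0).symm
  · intro h
    linear_combination (θ₁ * θ₂' * f₀ y₁ * f₀ y₂ * F₀ y₁ ^ (θ₁ + θ₂ - θ₂' - 1)) * e1
      - (θ₁ * θ₂ * f₀ y₁ * f₀ y₂ * F₀ y₁ ^ (θ₁ + θ₂ - θ₂' - 1)) * e2
      - (θ₁ * f₀ y₁ * f₀ y₂ * F₀ y₁ ^ (θ₁ + θ₂ - θ₂' - 1) * F₀ y₂ ^ (θ₁ + θ₂ + θ₂' - 1)) * h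
end Key2

theorem dprh_local_dependence_one_iff
    (a b : ℝ) (hab : a < b) (F₀ f₀ : ℝ → ℝ)
    (hderiv : ∀ y ∈ Ioo a b, HasDerivAt F₀ (f₀ y) y)
    (hf₀cont : ContinuousOn f₀ (Ioo a b))
    (hmono : StrictMonoOn F₀ (Ioo a b))
    (hf₀pos : ∀ y ∈ Ioo a b, 0 < f₀ y)
    (hF₀pos : ∀ y ∈ Ioo a b, 0 < F₀ y)
    (hF₀lt1 : ∀ y ∈ Ioo a b, F₀ y < 1)
    (hFa : Filter.Tendsto F₀ (nhdsWithin a (Ioi a)) (nhds 0))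
    (hFb : Filter.Tendsto F₀ (nhdsWithin b (Iio b)) (nhds 1))
    (θ₁ θ₂ θ₁' θ₂' : ℝ) (hθ₁ : 0 < θ₁) (hθ₂ : 0 < θ₂) (hθ₁' : 0 < θ₁') (hθ₂' : 0 < θ₂')
    :
    (∀ y₁ ∈ Ioo a b, ∀ y₂ ∈ Ioo a b, y₁ ≠ y₂ →
      (∫ u in a..y₁, ∫ v in a..y₂, dprh a b F₀ f₀ θ₁ θ₂ θ₁' θ₂' u v) * dprh a b F₀ f₀ θ₁ θ₂ θ₁' θ₂' y₁ y₂ /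
      (deriv (fun s => ∫ u in a..s, ∫ v in a..y₂, dprh a b F₀ f₀ θ₁ θ₂ θ₁' θ₂' u v) y₁ *
        deriv (fun t => ∫ u in a..y₁, ∫ v in a..t, dprh a b F₀ f₀ θ₁ θ₂ θ₁' θ₂' u v) y₂) = 1) ↔ (θ₁ = θ₁' ∧ θ₂ = θ₂') := by
  have m1 : (2 * a + b) / 3 ∈ Ioo a b := ⟨by linarith, by linarith⟩
  have m2 : (a + 2 * b) / 3 ∈ Ioo a b := ⟨by linarith, by linarith⟩
  have hlt : (2 * a + b) / 3 < (a + 2 * b) / 3 := by linarith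
  constructor
  · intro h
    constructor
    · exact (key1 hab hderiv hf₀cont hf₀pos hF₀pos hFa hθ₁ hθ₂ hθ₁' hθ₂' m1 m2 hlt).mp
        (h _ m1 _ m2 hlt.ne)
    · exact (key2 hab hderiv hf₀cont hf₀pos hF₀pos hFa hθ₁ hθ₂ hθ₁' hθ₂' m2 m1 hlt).mp
        (h _ m2 _ m1 hlt.ne')
  · rintro ⟨e1, e2⟩ y₁ h1 y₂ h2 hne
    rcases hne.lt_or_gt with hlt' | hgt'
    · exact (key1 hab hderiv hf₀cont hf₀pos hF₀pos hFa hθ₁ hθ₂ hθ₁' hθ₂' h1 h2 hlt').mpr e1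
    · exact (key2 hab hderiv hf₀cont hf₀pos hF₀pos hFa hθ₁ hθ₂ hθ₁' hθ₂' h1 h2 hgt').mpr e2
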